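/- For the ring Mₙ(F_q) of n×n matrices over the finite field F_q, there is a bijection between the projective line P(Mₙ(F_q)) and the Grassmannian of n-dimensional subspaces of a 2n-dimensional F_q-vector space, under which the distant relation corresponds to the complementarity of subspaces: X Δ Y iff X ⊕ Y = V(2n,q). -/

import Mathlib

open Matrix

/-- The cyclic left submodule `R(a,b)` of `R²`. -/
def ptSub (R : Type*) [Ring R] (a b : R) : Submodule R (Fin 2 → R) :=
  Submodule.span R {![a, b]}

/-- The right action of an invertible matrix `g` on submodules of `R²`, via `v ↦ v ᵥ* g`. -/
def mulGL (R : Type*) [Ring R] (g : (Matrix (Fin 2) (Fin 2) R)ˣ)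
    (p : Submodule R (Fin 2 → R)) : Submodule R (Fin 2 → R) :=
  p.map (Matrix.vecMulLinear g.val)

/-- The projective line over `R`: the orbit of `R(1,0)` under `GL₂(R)`. -/
def projLine (R : Type*) [Ring R] : Set (Submodule R (Fin 2 → R)) :=
  {p | ∃ g, mulGL R g (ptSub R 1 0) = p}

/-- The distant relation: the orbit of the pair `(R(1,0), R(0,1))` under `GL₂(R)`. -/
def IsDistant (R : Type*) [Ring R] (p q : Submodule R (Fin 2 → R)) : Prop :=
  ∃ g, mulGL R g (ptSub R 1 0) = p ∧ mulGL R g (ptSub R 0 1) = q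

/-- The row space in `F^n × F^n ≅ F^{2n}` of the `n × 2n` block matrix `[A|B]`. -/
def rowSpace {F : Type*} [Field F] {n : ℕ} (A B : Matrix (Fin n) (Fin n) F) :
    Submodule F ((Fin n → F) × (Fin n → F)) :=
  Submodule.span F (Set.range fun i : Fin n => (A i, B i))

namespace ProjGrassAux

open Submodule LinearMap

variable {F : Type*} [Field F] {n : ℕ}

noncomputable section

/-- `v ↦ (v ᵥ* a, v ᵥ* b)`. -/
def Lmap (a b : Matrix (Fin n) (Fin n) F) :
    (Fin n → F) →ₗ[F] (Fin n → F) × (Fin n → F) :=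
  (a.vecMulLinear).prod (b.vecMulLinear)

@[simp] lemma Lmap_apply (a b : Matrix (Fin n) (Fin n) F) (v : Fin n → F) :
    Lmap a b v = (v ᵥ* a, v ᵥ* b) := rfl

lemma vecMul_eq_sum' (v : Fin n → F) (M : Matrix (Fin n) (Fin n) F) :
    v ᵥ* M = ∑ i, v i • M i := by
  funext j
  simp [Matrix.vecMul, dotProduct, Finset.sum_apply, Pi.smul_apply, smul_eq_mul]

lemma Lmap_eq_sum (a b : Matrix (Fin n) (Fin n) F) (v : Fin n → F) :
    Lmap a b v = ∑ i, v i • (a i, b i) := by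
  refine Prod.ext ?_ ?_ <;>
    simp [vecMul_eq_sum', Prod.fst_sum, Prod.snd_sum]

lemma range_Lmap (a b : Matrix (Fin n) (Fin n) F) :
    LinearMap.range (Lmap a b) = rowSpace a b := by
  apply le_antisymm
  · rintro x ⟨v, rfl⟩
    rw [Lmap_eq_sum]
    exact Submodule.sum_mem _ fun i _ =>
      Submodule.smul_mem _ _ (Submodule.subset_span ⟨i, rfl⟩)
  · rw [rowSpace, Submodule.span_le]
    rintro x ⟨i, rfl⟩
    exact ⟨Pi.single i 1, by simp [Matrix.single_one_vecMul, Matrix.row_apply']⟩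

lemma mem_rowSpace {a b : Matrix (Fin n) (Fin n) F} {x} :
    x ∈ rowSpace a b ↔ ∃ v, Lmap a b v = x := by
  rw [← range_Lmap]; rfl

/-- `(x,y) ↦ (x,y) ᵥ* g` blockwise. -/
def Tmap (g : Matrix (Fin 2) (Fin 2) (Matrix (Fin n) (Fin n) F)) :
    (Fin n → F) × (Fin n → F) →ₗ[F] (Fin n → F) × (Fin n → F) :=
  (Lmap (g 0 0) (g 0 1)).coprod (Lmap (g 1 0) (g 1 1))

lemma Tmap_apply (g : Matrix (Fin 2) (Fin 2) (Matrix (Fin n) (Fin n) F)) (x y : Fin n → F) :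
    Tmap g (x, y) = (x ᵥ* g 0 0 + y ᵥ* g 1 0, x ᵥ* g 0 1 + y ᵥ* g 1 1) := rfl

lemma range_Tmap (g : Matrix (Fin 2) (Fin 2) (Matrix (Fin n) (Fin n) F)) :
    LinearMap.range (Tmap g) = rowSpace (g 0 0) (g 0 1) ⊔ rowSpace (g 1 0) (g 1 1) := by
  rw [Tmap, LinearMap.range_coprod, range_Lmap, range_Lmap]

lemma Tmap_mul (g h : Matrix (Fin 2) (Fin 2) (Matrix (Fin n) (Fin n) F)) :
    Tmap (g * h) = (Tmap h).comp (Tmap g) := by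
  apply LinearMap.ext
  rintro ⟨x, y⟩
  show Tmap (g * h) (x, y) = Tmap h (Tmap g (x, y))
  simp only [Tmap_apply, Matrix.mul_apply, Fin.sum_univ_two, Matrix.vecMul_add,
    Matrix.add_vecMul, Matrix.vecMul_vecMul]
  simp only [Prod.mk.injEq]
  constructor <;> abel

lemma Tmap_one : Tmap (1 : Matrix (Fin 2) (Fin 2) (Matrix (Fin n) (Fin n) F)) = LinearMap.id := by
  apply LinearMap.ext
  rintro ⟨x, y⟩
  simp [Tmap_apply, Matrix.one_apply, show (0 : Fin 2) ≠ 1 by decide,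
    show (1 : Fin 2) ≠ 0 by decide]

/-- `Tmap` as a ring hom into the opposite endomorphism ring. -/
def theta : Matrix (Fin 2) (Fin 2) (Matrix (Fin n) (Fin n) F) →+*
    (Module.End F ((Fin n → F) × (Fin n → F)))ᵐᵒᵖ where
  toFun g := MulOpposite.op (Tmap g)
  map_one' := by rw [Tmap_one]; rfl
  map_mul' g h := by
    rw [← MulOpposite.op_mul]
    exact congrArg MulOpposite.op (Tmap_mul g h)
  map_zero' := by
    apply congrArg MulOpposite.op
    apply LinearMap.ext; rintro ⟨x, y⟩
    simp [Tmap_apply]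
  map_add' g h := by
    rw [← MulOpposite.op_add]
    apply congrArg MulOpposite.op
    apply LinearMap.ext; rintro ⟨x, y⟩
    simp only [Tmap_apply, Matrix.add_apply, Matrix.vecMul_add, LinearMap.add_apply,
      Prod.mk_add_mk, Prod.mk.injEq]
    constructor <;> abel

lemma theta_injective : Function.Injective (theta (F := F) (n := n)) := by
  intro g h e
  have e' : Tmap g = Tmap h := MulOpposite.op_injective e
  have key : ∀ x y, Tmap g (x, y) = Tmap h (x, y) := fun x y => by rw [e']
  have top : ∀ i : Fin n, (g 0 0 i, g 0 1 i) = (h 0 0 i, h 0 1 i) := by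
    intro i
    simpa [Tmap_apply, Matrix.single_one_vecMul, Matrix.row_apply'] using key (Pi.single i 1) 0
  have bot : ∀ i : Fin n, (g 1 0 i, g 1 1 i) = (h 1 0 i, h 1 1 i) := by
    intro i
    simpa [Tmap_apply, Matrix.single_one_vecMul, Matrix.row_apply'] using key 0 (Pi.single i 1)
  ext k l i j
  fin_cases k <;> fin_cases l
  · exact congrFun (Prod.ext_iff.mp (top i)).1 j
  · exact congrFun (Prod.ext_iff.mp (top i)).2 j
  · exact congrFun (Prod.ext_iff.mp (bot i)).1 j
  · exact congrFun (Prod.ext_iff.mp (bot i)).2 j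

lemma vecMul_toMatrix'T (K : (Fin n → F) →ₗ[F] (Fin n → F)) (v : Fin n → F) :
    v ᵥ* (LinearMap.toMatrix' K)ᵀ = K v := by
  rw [Matrix.vecMul_transpose, ← Matrix.toLin'_apply, Matrix.toLin'_toMatrix']

lemma theta_surjective : Function.Surjective (theta (F := F) (n := n)) := by
  intro s
  obtain ⟨S, rfl⟩ := MulOpposite.op_surjective s
  set S00 := (LinearMap.fst F (Fin n → F) (Fin n → F)).comp
    (S.comp (LinearMap.inl F (Fin n → F) (Fin n → F))) with hS00
  set S01 := (LinearMap.snd F (Fin n → F) (Fin n → F)).comp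
    (S.comp (LinearMap.inl F (Fin n → F) (Fin n → F))) with hS01
  set S10 := (LinearMap.fst F (Fin n → F) (Fin n → F)).comp
    (S.comp (LinearMap.inr F (Fin n → F) (Fin n → F))) with hS10
  set S11 := (LinearMap.snd F (Fin n → F) (Fin n → F)).comp
    (S.comp (LinearMap.inr F (Fin n → F) (Fin n → F))) with hS11
  refine ⟨![![(LinearMap.toMatrix' S00)ᵀ, (LinearMap.toMatrix' S01)ᵀ],
            ![(LinearMap.toMatrix' S10)ᵀ, (LinearMap.toMatrix' S11)ᵀ]], ?_⟩
  apply congrArg MulOpposite.op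
  apply LinearMap.ext
  rintro ⟨x, y⟩
  show Tmap _ (x, y) = S (x, y)
  erw [Tmap_apply]
  simp only [Matrix.cons_val', Matrix.cons_val_zero, Matrix.cons_val_one, Matrix.head_cons,
    Matrix.head_fin_const, Matrix.empty_val', Matrix.cons_val_fin_one]
  rw [vecMul_toMatrix'T, vecMul_toMatrix'T, vecMul_toMatrix'T, vecMul_toMatrix'T]
  have hxy : ((x, y) : (Fin n → F) × (Fin n → F)) = (x, 0) + (0, y) := by simp
  conv_rhs => rw [hxy, map_add]
  simp [hS00, hS01, hS10, hS11, Prod.ext_iff]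

lemma isUnit_iff_bijective (g : Matrix (Fin 2) (Fin 2) (Matrix (Fin n) (Fin n) F)) :
    IsUnit g ↔ Function.Bijective (Tmap g) := by
  have hbij : Function.Bijective (theta (F := F) (n := n)) :=
    ⟨theta_injective, theta_surjective⟩
  let e := RingEquiv.ofBijective _ hbij
  have h1 : IsUnit g ↔ IsUnit (theta g) := by
    constructor
    · exact fun h => h.map theta
    · intro h
      have h2 : e.symm (theta g) = g := e.symm_apply_apply g
      have := h.map e.symm
      rwa [h2] at this
  rw [h1]
  show IsUnit (MulOpposite.op (Tmap g)) ↔ _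
  rw [isUnit_op]
  exact Module.End.isUnit_iff _

lemma Tmap_inl (g : Matrix (Fin 2) (Fin 2) (Matrix (Fin n) (Fin n) F)) (x : Fin n → F) :
    Tmap g (x, 0) = Lmap (g 0 0) (g 0 1) x := by
  simp [Tmap_apply, Lmap_apply]

lemma Tmap_inr (g : Matrix (Fin 2) (Fin 2) (Matrix (Fin n) (Fin n) F)) (y : Fin n → F) :
    Tmap g (0, y) = Lmap (g 1 0) (g 1 1) y := by
  simp [Tmap_apply, Lmap_apply]

lemma Tmap_pair (g : Matrix (Fin 2) (Fin 2) (Matrix (Fin n) (Fin n) F)) (x y : Fin n → F) :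
    Tmap g (x, y) = Lmap (g 0 0) (g 0 1) x + Lmap (g 1 0) (g 1 1) y := rfl

lemma inj_Lmap_top {g : Matrix (Fin 2) (Fin 2) (Matrix (Fin n) (Fin n) F)} (hg : IsUnit g) :
    Function.Injective (Lmap (g 0 0) (g 0 1)) := by
  have hb := (isUnit_iff_bijective g).mp hg
  intro x x' h
  have : Tmap g (x, 0) = Tmap g (x', 0) := by rw [Tmap_inl, Tmap_inl, h]
  exact (Prod.ext_iff.mp (hb.1 this)).1

lemma inj_Lmap_bot {g : Matrix (Fin 2) (Fin 2) (Matrix (Fin n) (Fin n) F)} (hg : IsUnit g) :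
    Function.Injective (Lmap (g 1 0) (g 1 1)) := by
  have hb := (isUnit_iff_bijective g).mp hg
  intro y y' h
  have : Tmap g (0, y) = Tmap g (0, y') := by rw [Tmap_inr, Tmap_inr, h]
  exact (Prod.ext_iff.mp (hb.1 this)).2

lemma finrank_rowSpace_of_inj {a b : Matrix (Fin n) (Fin n) F}
    (h : Function.Injective (Lmap a b)) :
    Module.finrank F (rowSpace a b) = n := by
  rw [← range_Lmap, LinearMap.finrank_range_of_inj h, Module.finrank_fin_fun]

lemma isCompl_of_isUnit {g : Matrix (Fin 2) (Fin 2) (Matrix (Fin n) (Fin n) F)}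
    (hg : IsUnit g) :
    IsCompl (rowSpace (g 0 0) (g 0 1)) (rowSpace (g 1 0) (g 1 1)) := by
  obtain ⟨hinj, hsurj⟩ := (isUnit_iff_bijective g).mp hg
  constructor
  · rw [disjoint_def]
    intro x hx hx'
    rw [← range_Lmap] at hx hx'
    obtain ⟨u, rfl⟩ := hx
    obtain ⟨w, hw⟩ := hx'
    have h0 : Tmap g (u, -w) = 0 := by
      rw [show ((u, -w) : (Fin n → F) × (Fin n → F)) = (u, 0) + (0, -w) by simp,
        map_add, Tmap_inl, Tmap_inr, map_neg, hw]
      simp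
    have := hinj (h0.trans (map_zero (Tmap g)).symm)
    have hu : u = 0 := (Prod.ext_iff.mp this).1
    rw [hu, map_zero]
  · rw [codisjoint_iff, ← range_Tmap]
    exact LinearMap.range_eq_top.mpr hsurj

lemma isUnit_of_isCompl {a b c d : Matrix (Fin n) (Fin n) F}
    (h0 : Function.Injective (Lmap a b)) (h1 : Function.Injective (Lmap c d))
    (hc : IsCompl (rowSpace a b) (rowSpace c d)) :
    IsUnit (Matrix.of ![![a, b], ![c, d]]) := by
  refine (isUnit_iff_bijective (F := F) (n := n) (Matrix.of ![![a, b], ![c, d]])).mpr ?_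
  have e00 : (Matrix.of ![![a, b], ![c, d]]) 0 0 = a := rfl
  have e01 : (Matrix.of ![![a, b], ![c, d]]) 0 1 = b := rfl
  have e10 : (Matrix.of ![![a, b], ![c, d]]) 1 0 = c := rfl
  have e11 : (Matrix.of ![![a, b], ![c, d]]) 1 1 = d := rfl
  constructor
  · rw [← LinearMap.ker_eq_bot, Submodule.eq_bot_iff]
    rintro ⟨x, y⟩ hxy
    rw [LinearMap.mem_ker, Tmap_pair, e00, e01, e10, e11] at hxy
    have hmem : Lmap a b x ∈ rowSpace a b ⊓ rowSpace c d := by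
      constructor
      · rw [← range_Lmap]; exact ⟨x, rfl⟩
      · rw [← range_Lmap]
        refine ⟨-y, ?_⟩
        rw [map_neg]
        exact neg_eq_of_add_eq_zero_left hxy
    rw [hc.disjoint.eq_bot, Submodule.mem_bot] at hmem
    have hx : x = 0 := h0 (hmem.trans (map_zero (Lmap a b)).symm)
    have hy : y = 0 := by
      apply h1
      rw [map_zero]
      rw [hx, map_zero, zero_add] at hxy
      exact hxy
    rw [hx, hy]; rfl
  · rw [← LinearMap.range_eq_top, range_Tmap, e00, e01, e10, e11]
    exact codisjoint_iff.mp hc.codisjoint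

lemma vecMul_e0 (M : Matrix (Fin 2) (Fin 2) (Matrix (Fin n) (Fin n) F)) :
    ![(1 : Matrix (Fin n) (Fin n) F), 0] ᵥ* M = ![M 0 0, M 0 1] := by
  funext j
  fin_cases j <;>
    simp [Matrix.vecMul, dotProduct, Fin.sum_univ_two]

lemma vecMul_e1 (M : Matrix (Fin 2) (Fin 2) (Matrix (Fin n) (Fin n) F)) :
    ![(0 : Matrix (Fin n) (Fin n) F), 1] ᵥ* M = ![M 1 0, M 1 1] := by
  funext j
  fin_cases j <;>
    simp [Matrix.vecMul, dotProduct, Fin.sum_univ_two]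

lemma mulGL_one_zero (g : (Matrix (Fin 2) (Fin 2) (Matrix (Fin n) (Fin n) F))ˣ) :
    mulGL (Matrix (Fin n) (Fin n) F) g (ptSub (Matrix (Fin n) (Fin n) F) 1 0) =
      ptSub (Matrix (Fin n) (Fin n) F) (g.1 0 0) (g.1 0 1) := by
  unfold mulGL ptSub
  rw [Submodule.map_span, Set.image_singleton, Matrix.vecMulLinear_apply, vecMul_e0]

lemma mulGL_zero_one (g : (Matrix (Fin 2) (Fin 2) (Matrix (Fin n) (Fin n) F))ˣ) :
    mulGL (Matrix (Fin n) (Fin n) F) g (ptSub (Matrix (Fin n) (Fin n) F) 0 1) =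
      ptSub (Matrix (Fin n) (Fin n) F) (g.1 1 0) (g.1 1 1) := by
  unfold mulGL ptSub
  rw [Submodule.map_span, Set.image_singleton, Matrix.vecMulLinear_apply, vecMul_e1]

lemma mem_projLine_iff (p : Submodule (Matrix (Fin n) (Fin n) F) (Fin 2 → Matrix (Fin n) (Fin n) F)) :
    p ∈ projLine (Matrix (Fin n) (Fin n) F) ↔
      ∃ g : (Matrix (Fin 2) (Fin 2) (Matrix (Fin n) (Fin n) F))ˣ,
        p = ptSub (Matrix (Fin n) (Fin n) F) (g.1 0 0) (g.1 0 1) := by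
  constructor
  · rintro ⟨g, rfl⟩
    exact ⟨g, mulGL_one_zero g⟩
  · rintro ⟨g, rfl⟩
    exact ⟨g, mulGL_one_zero g⟩

/-- The intrinsic row space of a submodule of `R²`. -/
def toRowSpace (p : Submodule (Matrix (Fin n) (Fin n) F) (Fin 2 → Matrix (Fin n) (Fin n) F)) :
    Submodule F ((Fin n → F) × (Fin n → F)) :=
  Submodule.span F {x | ∃ m ∈ p, ∃ i : Fin n, x = (m 0 i, m 1 i)}

lemma mul_row (X a : Matrix (Fin n) (Fin n) F) (i : Fin n) :
    (X * a) i = X i ᵥ* a := by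
  funext j
  simp [Matrix.mul_apply, Matrix.vecMul, dotProduct]

lemma toRowSpace_ptSub (a b : Matrix (Fin n) (Fin n) F) :
    toRowSpace (ptSub (Matrix (Fin n) (Fin n) F) a b) = rowSpace a b := by
  apply le_antisymm
  · rw [toRowSpace, Submodule.span_le]
    rintro x ⟨m, hm, i, rfl⟩
    rw [ptSub, Submodule.mem_span_singleton] at hm
    obtain ⟨X, rfl⟩ := hm
    have h0 : (X • ![a, b]) 0 = X * a := by
      simp [Pi.smul_apply, smul_eq_mul]
    have h1 : (X • ![a, b]) 1 = X * b := by
      simp [Pi.smul_apply, smul_eq_mul]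
    rw [SetLike.mem_coe, h0, h1, ← range_Lmap]
    exact ⟨X i, by rw [Lmap_apply, mul_row, mul_row]⟩
  · rw [rowSpace, Submodule.span_le]
    rintro x ⟨i, rfl⟩
    apply Submodule.subset_span
    exact ⟨![a, b], Submodule.mem_span_singleton_self _, i, by simp⟩

lemma rows_mem_rowSpace (a b : Matrix (Fin n) (Fin n) F) (i : Fin n) :
    ((a i, b i) : (Fin n → F) × (Fin n → F)) ∈ rowSpace a b :=
  Submodule.subset_span ⟨i, rfl⟩

lemma ptSub_le_ptSub {a b c d : Matrix (Fin n) (Fin n) F}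
    (h : ∀ i : Fin n, ((c i, d i) : (Fin n → F) × (Fin n → F)) ∈ rowSpace a b) :
    ptSub (Matrix (Fin n) (Fin n) F) c d ≤ ptSub (Matrix (Fin n) (Fin n) F) a b := by
  have h' : ∀ i : Fin n, ∃ v, Lmap a b v = ((c i, d i) : (Fin n → F) × (Fin n → F)) :=
    fun i => mem_rowSpace.mp (h i)
  choose v hv using h'
  rw [ptSub, Submodule.span_le, Set.singleton_subset_iff, SetLike.mem_coe, ptSub,
    Submodule.mem_span_singleton]
  refine ⟨Matrix.of v, ?_⟩
  have hca : Matrix.of v * a = c := by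
    ext i j
    rw [mul_row]
    exact congrFun (Prod.ext_iff.mp (hv i)).1 j
  have hdb : Matrix.of v * b = d := by
    ext i j
    rw [mul_row]
    exact congrFun (Prod.ext_iff.mp (hv i)).2 j
  funext k
  fin_cases k
  · show (Matrix.of v • ![a, b]) 0 = ![c, d] 0
    simp [Pi.smul_apply, smul_eq_mul, hca]
  · show (Matrix.of v • ![a, b]) 1 = ![c, d] 1
    simp [Pi.smul_apply, smul_eq_mul, hdb]

end
end ProjGrassAux

open ProjGrassAux

/-- There is a bijection between `P(Mₙ(F_q))` and the Grassmannian of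
`n`-dimensional subspaces of a `2n`-dimensional `F_q`-vector space, sending the point
generated by `(A,B)` to the row space of `[A|B]`, under which the distant relation
corresponds to complementarity of subspaces. -/
theorem projLine_matrix_equiv_grassmannian (F : Type*) [Field F] [Fintype F] (n : ℕ) :
    ∃ e : {p : Submodule (Matrix (Fin n) (Fin n) F) (Fin 2 → Matrix (Fin n) (Fin n) F) //
            p ∈ projLine (Matrix (Fin n) (Fin n) F)} ≃
          {W : Submodule F ((Fin n → F) × (Fin n → F)) // Module.finrank F W = n},
      (∀ p q, IsDistant (Matrix (Fin n) (Fin n) F) p.1 q.1 ↔ IsCompl (e p).1 (e q).1) ∧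
      (∀ (A B : Matrix (Fin n) (Fin n) F)
          (h : ptSub (Matrix (Fin n) (Fin n) F) A B ∈ projLine (Matrix (Fin n) (Fin n) F)),
        (e ⟨ptSub (Matrix (Fin n) (Fin n) F) A B, h⟩).1 = rowSpace A B) := by
  classical
  have hdim : ∀ p : {p // p ∈ projLine (Matrix (Fin n) (Fin n) F)},
      Module.finrank F (toRowSpace p.1) = n := by
    rintro ⟨p, hp⟩
    obtain ⟨g, rfl⟩ := (mem_projLine_iff p).mp hp
    rw [toRowSpace_ptSub]
    exact finrank_rowSpace_of_inj (inj_Lmap_top g.isUnit)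
  let f : {p // p ∈ projLine (Matrix (Fin n) (Fin n) F)} →
      {W : Submodule F ((Fin n → F) × (Fin n → F)) // Module.finrank F W = n} :=
    fun p => ⟨toRowSpace p.1, hdim p⟩
  have finj : Function.Injective f := by
    rintro ⟨p, hp⟩ ⟨q, hq⟩ hfq
    obtain ⟨g, rfl⟩ := (mem_projLine_iff p).mp hp
    obtain ⟨g', rfl⟩ := (mem_projLine_iff q).mp hq
    have hr : rowSpace (g.1 0 0) (g.1 0 1) = rowSpace (g'.1 0 0) (g'.1 0 1) := by
      have h2 := congrArg Subtype.val hfq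
      simpa [f, toRowSpace_ptSub] using h2
    apply Subtype.ext
    apply le_antisymm
    · exact ptSub_le_ptSub (fun i => by rw [← hr]; exact rows_mem_rowSpace _ _ i)
    · exact ptSub_le_ptSub (fun i => by rw [hr]; exact rows_mem_rowSpace _ _ i)
  have fsurj : Function.Surjective f := by
    rintro ⟨W, hW⟩
    obtain ⟨W', hWW'⟩ := Submodule.exists_isCompl W
    have hV : Module.finrank F ((Fin n → F) × (Fin n → F)) = n + n := by
      rw [Module.finrank_prod, Module.finrank_fin_fun]
    have hW' : Module.finrank F W' = n := by
      have h2 := Submodule.finrank_add_eq_of_isCompl hWW'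
      rw [hV, hW] at h2
      omega
    let bW := Module.finBasisOfFinrankEq F W hW
    let bW' := Module.finBasisOfFinrankEq F W' hW'
    let a : Matrix (Fin n) (Fin n) F :=
      Matrix.of fun i => (bW i : (Fin n → F) × (Fin n → F)).1
    let b : Matrix (Fin n) (Fin n) F :=
      Matrix.of fun i => (bW i : (Fin n → F) × (Fin n → F)).2
    let c : Matrix (Fin n) (Fin n) F :=
      Matrix.of fun i => (bW' i : (Fin n → F) × (Fin n → F)).1
    let d : Matrix (Fin n) (Fin n) F :=
      Matrix.of fun i => (bW' i : (Fin n → F) × (Fin n → F)).2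
    have hspan : ∀ (U : Submodule F ((Fin n → F) × (Fin n → F))) (bU : Module.Basis (Fin n) F U),
        Submodule.span F (Set.range fun i => (bU i : (Fin n → F) × (Fin n → F))) = U := by
      intro U bU
      have hr : (Set.range fun i => (bU i : (Fin n → F) × (Fin n → F))) =
          U.subtype '' Set.range bU := by
        rw [← Set.range_comp]; rfl
      rw [hr, Submodule.span_image, Module.Basis.span_eq, Submodule.map_subtype_top]
    have hra : rowSpace a b = W := by
      have : rowSpace a b =
          Submodule.span F (Set.range fun i => (bW i : (Fin n → F) × (Fin n → F))) := rfl
      rw [this, hspan W bW]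
    have hrc : rowSpace c d = W' := by
      have : rowSpace c d =
          Submodule.span F (Set.range fun i => (bW' i : (Fin n → F) × (Fin n → F))) := rfl
      rw [this, hspan W' bW']
    have hinj : ∀ (U : Submodule F ((Fin n → F) × (Fin n → F))) (bU : Module.Basis (Fin n) F U),
        Function.Injective (Lmap (Matrix.of fun i => (bU i : (Fin n → F) × (Fin n → F)).1)
          (Matrix.of fun i => (bU i : (Fin n → F) × (Fin n → F)).2)) := by
      intro U bU
      have hli : LinearIndependent F (fun i : Fin n => (bU i : (Fin n → F) × (Fin n → F))) :=
        bU.linearIndependent.map' U.subtype (Submodule.ker_subtype U)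
      rw [← LinearMap.ker_eq_bot, Submodule.eq_bot_iff]
      intro v hv
      rw [LinearMap.mem_ker, Lmap_eq_sum] at hv
      have hz := Fintype.linearIndependent_iff.mp hli v hv
      funext i
      exact hz i
    have hu : IsUnit (Matrix.of ![![a, b], ![c, d]]) :=
      isUnit_of_isCompl (hinj W bW) (hinj W' bW') (by rw [hra, hrc]; exact hWW')
    refine ⟨⟨ptSub (Matrix (Fin n) (Fin n) F) a b, ?_⟩, ?_⟩
    · rw [mem_projLine_iff]
      refine ⟨hu.unit, ?_⟩
      rw [IsUnit.unit_spec]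
      simp
    · apply Subtype.ext
      show toRowSpace (ptSub (Matrix (Fin n) (Fin n) F) a b) = W
      rw [toRowSpace_ptSub, hra]
  refine ⟨Equiv.ofBijective f ⟨finj, fsurj⟩, ?_, ?_⟩
  · intro p q
    constructor
    · rintro ⟨g, h1, h2⟩
      rw [mulGL_one_zero] at h1
      rw [mulGL_zero_one] at h2
      show IsCompl (toRowSpace p.1) (toRowSpace q.1)
      rw [← h1, ← h2, toRowSpace_ptSub, toRowSpace_ptSub]
      exact isCompl_of_isUnit g.isUnit
    · intro hc
      have hc' : IsCompl (toRowSpace p.1) (toRowSpace q.1) := hc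
      obtain ⟨g, hp⟩ := (mem_projLine_iff p.1).mp p.2
      obtain ⟨g', hq⟩ := (mem_projLine_iff q.1).mp q.2
      rw [hp, hq, toRowSpace_ptSub, toRowSpace_ptSub] at hc'
      have hu : IsUnit (Matrix.of ![![g.1 0 0, g.1 0 1], ![g'.1 0 0, g'.1 0 1]]) :=
        isUnit_of_isCompl (inj_Lmap_top g.isUnit) (inj_Lmap_top g'.isUnit) hc'
      refine ⟨hu.unit, ?_, ?_⟩
      · rw [mulGL_one_zero, IsUnit.unit_spec, hp]
        simp
      · rw [mulGL_zero_one, IsUnit.unit_spec, hq]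
        simp
  · intro A B h
    show toRowSpace (ptSub (Matrix (Fin n) (Fin n) F) A B) = rowSpace A B
    exact toRowSpace_ptSub A B
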